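/- Let n, k be nonzero integers, r = n/k, and set 4α = (1 - r²)β² (rational-resonance condition; note ρ = rβ when β > 0). Then for any solution w of w'' + β w' + α w = 0, the function J(ζ) = (2w' + (1+r)β w)^{n+k} · (2w' + (1-r)β w)^{n-k} is constant (here powers are integer powers, so J is a rational function of w and w', and no positivity assumptions are needed). -/

import Mathlib

theorem stmt_19 (α β : ℝ) (hβ : 0 < β) (n k : ℤ) (hn : n ≠ 0) (hk : k ≠ 0)
    (r : ℝ) (hr : r = (n : ℝ) / (k : ℝ)) (hα : 4 * α = (1 - r ^ 2) * β ^ 2)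
    (w : ℝ → ℝ) (hw : Differentiable ℝ w) (hw' : Differentiable ℝ (deriv w))
    (heq : ∀ ζ : ℝ, deriv (deriv w) ζ + β * deriv w ζ + α * w ζ = 0)
    (a b : ℝ)
    (hne : ∀ ζ ∈ Set.Ioo a b,
      2 * deriv w ζ + (1 + r) * β * w ζ ≠ 0 ∧ 2 * deriv w ζ + (1 - r) * β * w ζ ≠ 0) :
    ∀ x ∈ Set.Ioo a b, ∀ x' ∈ Set.Ioo a b,
      (2 * deriv w x + (1 + r) * β * w x) ^ (n + k) *
        (2 * deriv w x + (1 - r) * β * w x) ^ (n - k)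
      = (2 * deriv w x' + (1 + r) * β * w x') ^ (n + k) *
        (2 * deriv w x' + (1 - r) * β * w x') ^ (n - k) := by
  set u : ℝ → ℝ := fun ζ => 2 * deriv w ζ + (1 + r) * β * w ζ with hu
  set v : ℝ → ℝ := fun ζ => 2 * deriv w ζ + (1 - r) * β * w ζ with hv
  set J : ℝ → ℝ := fun ζ => u ζ ^ (n + k) * v ζ ^ (n - k) with hJ
  have hkR : (k : ℝ) ≠ 0 := Int.cast_ne_zero.mpr hk
  have hrk : r * k = n := by rw [hr]; field_simp
  -- derivatives of u and v everywhere
  have hdu : ∀ x : ℝ, HasDerivAt u (-((1 - r) * β / 2) * u x) x := by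
    intro x
    have h1 : HasDerivAt (deriv w) (deriv (deriv w) x) x := (hw' x).hasDerivAt
    have h2 : HasDerivAt w (deriv w x) x := (hw x).hasDerivAt
    have h0 : HasDerivAt u (2 * deriv (deriv w) x + (1 + r) * β * deriv w x) x := by
      exact (h1.const_mul 2).add (h2.const_mul ((1 + r) * β))
    convert h0 using 1
    simp only [hu]
    linear_combination (-2 : ℝ) * heq x + (w x / 2) * hα
  have hdv : ∀ x : ℝ, HasDerivAt v (-((1 + r) * β / 2) * v x) x := by
    intro x
    have h1 : HasDerivAt (deriv w) (deriv (deriv w) x) x := (hw' x).hasDerivAt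
    have h2 : HasDerivAt w (deriv w x) x := (hw x).hasDerivAt
    have h0 : HasDerivAt v (2 * deriv (deriv w) x + (1 - r) * β * deriv w x) x := by
      exact (h1.const_mul 2).add (h2.const_mul ((1 - r) * β))
    convert h0 using 1
    simp only [hv]
    linear_combination (-2 : ℝ) * heq x + (w x / 2) * hα
  have hdJ : ∀ x ∈ Set.Ioo a b, HasDerivAt J 0 x := by
    intro x hx
    obtain ⟨hux, hvx⟩ := hne x hx
    have hux' : u x ≠ 0 := hux
    have hvx' : v x ≠ 0 := hvx
    have h1 : HasDerivAt (fun ζ => u ζ ^ (n + k))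
        (((n + k : ℤ) : ℝ) * u x ^ (n + k - 1) * (-((1 - r) * β / 2) * u x)) x :=
      (hasDerivAt_zpow (n + k) (u x) (Or.inl hux')).comp x (hdu x)
    have h2 : HasDerivAt (fun ζ => v ζ ^ (n - k))
        (((n - k : ℤ) : ℝ) * v x ^ (n - k - 1) * (-((1 + r) * β / 2) * v x)) x :=
      (hasDerivAt_zpow (n - k) (v x) (Or.inl hvx')).comp x (hdv x)
    have e1 : u x ^ (n + k - 1) * u x = u x ^ (n + k) := by
      rw [← zpow_add_one₀ hux']; ring_nf
    have e2 : v x ^ (n - k - 1) * v x = v x ^ (n - k) := by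
      rw [← zpow_add_one₀ hvx']; ring_nf
    have h1' : HasDerivAt (fun ζ => u ζ ^ (n + k))
        (-((1 - r) * β / 2) * ((n + k : ℤ) : ℝ) * u x ^ (n + k)) x := by
      convert h1 using 1
      rw [show ((n + k : ℤ) : ℝ) * u x ^ (n + k - 1) * (-((1 - r) * β / 2) * u x)
          = -((1 - r) * β / 2) * ((n + k : ℤ) : ℝ) * (u x ^ (n + k - 1) * u x) by ring, e1]
    have h2' : HasDerivAt (fun ζ => v ζ ^ (n - k))
        (-((1 + r) * β / 2) * ((n - k : ℤ) : ℝ) * v x ^ (n - k)) x := by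
      convert h2 using 1
      rw [show ((n - k : ℤ) : ℝ) * v x ^ (n - k - 1) * (-((1 + r) * β / 2) * v x)
          = -((1 + r) * β / 2) * ((n - k : ℤ) : ℝ) * (v x ^ (n - k - 1) * v x) by ring, e2]
    have h3 := h1'.mul h2'
    convert h3 using 1
    any_goals rfl
    push_cast
    linear_combination (-β * u x ^ (n + k) * v x ^ (n - k)) * hrk
  have hconv : Convex ℝ (Set.Ioo a b) := convex_Ioo a b
  intro x hx x' hx'
  have hdiff : DifferentiableOn ℝ J (Set.Ioo a b) := fun z hz =>
    ((hdJ z hz).differentiableAt).differentiableWithinAt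
  have hfd : ∀ z ∈ Set.Ioo a b, fderivWithin ℝ J (Set.Ioo a b) z = 0 := by
    intro z hz
    have h0 := (hdJ z hz).hasFDerivAt
    rw [fderivWithin_of_isOpen isOpen_Ioo hz, h0.fderiv]
    ext y
    simp
  exact hconv.is_const_of_fderivWithin_eq_zero hdiff hfd hx hx'
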